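/- arXiv:1011.3887 — 3 statements merged into one kernel-verified Lean document; each statement's English description precedes it below -/
import Mathlib

section
/- Let α ∈ (1,2], let f belong to Co(α) with Taylor coefficients a₂, a₃, and let λ be a real number with λ ≤ 2(α−3)/(3(α−1)). Then |a₃ − λa₂²| ≤ (2α²+1)/3 − λα². -/
open Complex Metric
open Filter Topology

noncomputable section

/-- The open unit disk in ℂ. -/
def unitDisk : Set ℂ := ball 0 1

/-- φ is a (normalized) starlike univalent function on the unit disk. -/
def IsStarlike (φ : ℂ → ℂ) : Prop :=
  DifferentiableOn ℂ φ unitDisk ∧ φ 0 = 0 ∧ deriv φ 0 = 1 ∧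
    (∀ z ∈ unitDisk, z ≠ 0 → φ z ≠ 0) ∧
    ∀ z ∈ unitDisk, 0 < (z * deriv φ z / φ z).re

/-- The function P_f from the analytic characterization of Co(α). -/
def Pfun (α : ℝ) (f : ℂ → ℂ) (z : ℂ) : ℂ :=
  (2 / ((α : ℂ) - 1)) *
    (((α : ℂ) + 1) / 2 * ((1 + z) / (1 - z)) - 1 - z * deriv (deriv f) z / deriv f z)

/-- f belongs to the class Co(α) of concave univalent functions. -/
def IsConcaveUnivalent (α : ℝ) (f : ℂ → ℂ) : Prop :=
  DifferentiableOn ℂ f unitDisk ∧ f 0 = 0 ∧ deriv f 0 = 1 ∧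
    (∀ z ∈ unitDisk, deriv f z ≠ 0) ∧
    ∀ z ∈ unitDisk, 0 < (Pfun α f z).re

lemma mem0 : (0:ℂ) ∈ unitDisk := mem_ball_self one_pos

lemma unitDisk_mem_nhds : unitDisk ∈ 𝓝 (0:ℂ) := isOpen_ball.mem_nhds mem0

lemma mulD1 {u v : ℂ → ℂ} (hu : AnalyticOnNhd ℂ u unitDisk) (hv : AnalyticOnNhd ℂ v unitDisk) :
    deriv (fun z => u z * v z) 0 = deriv u 0 * v 0 + u 0 * deriv v 0 :=
  deriv_mul (hu 0 mem0).differentiableAt (hv 0 mem0).differentiableAt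

lemma mulD2 {u v : ℂ → ℂ} (hu : AnalyticOnNhd ℂ u unitDisk) (hv : AnalyticOnNhd ℂ v unitDisk) :
    deriv (deriv (fun z => u z * v z)) 0
      = deriv (deriv u) 0 * v 0 + 2 * deriv u 0 * deriv v 0 + u 0 * deriv (deriv v) 0 := by
  have h1 : deriv (fun z => u z * v z) =ᶠ[𝓝 0] fun z => deriv u z * v z + u z * deriv v z :=
    eventuallyEq_of_mem unitDisk_mem_nhds fun z hz =>
      deriv_mul (hu z hz).differentiableAt (hv z hz).differentiableAt
  rw [h1.deriv_eq, deriv_fun_add (f := fun z => deriv u z * v z) (g := fun z => u z * deriv v z)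
      (((hu.deriv 0 mem0).mul (hv 0 mem0)).differentiableAt)
      (((hu 0 mem0).mul (hv.deriv 0 mem0)).differentiableAt),
    deriv_fun_mul (hu.deriv 0 mem0).differentiableAt (hv 0 mem0).differentiableAt,
    deriv_fun_mul (hu 0 mem0).differentiableAt (hv.deriv 0 mem0).differentiableAt]
  ring

lemma combD1 {u v : ℂ → ℂ} (hu : AnalyticOnNhd ℂ u unitDisk) (hv : AnalyticOnNhd ℂ v unitDisk)
    (a b c : ℂ) :
    deriv (fun z => a * u z - c - b * v z) 0 = a * deriv u 0 - b * deriv v 0 :=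
  ((((hu 0 mem0).differentiableAt.hasDerivAt.const_mul a).sub_const c).sub
    ((hv 0 mem0).differentiableAt.hasDerivAt.const_mul b)).deriv

lemma combD2 {u v : ℂ → ℂ} (hu : AnalyticOnNhd ℂ u unitDisk) (hv : AnalyticOnNhd ℂ v unitDisk)
    (a b c : ℂ) :
    deriv (deriv (fun z => a * u z - c - b * v z)) 0
      = a * deriv (deriv u) 0 - b * deriv (deriv v) 0 := by
  have h1 : deriv (fun z => a * u z - c - b * v z) =ᶠ[𝓝 0]
      fun z => a * deriv u z - b * deriv v z :=
    eventuallyEq_of_mem unitDisk_mem_nhds fun z hz =>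
      ((((hu z hz).differentiableAt.hasDerivAt.const_mul a).sub_const c).sub
        ((hv z hz).differentiableAt.hasDerivAt.const_mul b)).deriv
  rw [h1.deriv_eq]
  exact (((hu.deriv 0 mem0).differentiableAt.hasDerivAt.const_mul a).sub
    ((hv.deriv 0 mem0).differentiableAt.hasDerivAt.const_mul b)).deriv

lemma key_normSq (a w : ℂ) :
    normSq (1 - (starRingEnd ℂ) a * w) - normSq (w - a) = (1 - normSq a) * (1 - normSq w) := by
  simp only [normSq_apply, mul_re, mul_im, conj_re, conj_im, sub_re, sub_im, one_re, one_im]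
  ring

lemma abs_sub_one_lt {w : ℂ} (hw : 0 < w.re) : ‖w - 1‖ < ‖w + 1‖ := by
  have h2 : ‖w - 1‖ ^ 2 < ‖w + 1‖ ^ 2 := by
    rw [Complex.sq_norm, Complex.sq_norm]
    simp only [normSq_apply, sub_re, sub_im, add_re, add_im, one_re, one_im]
    nlinarith
  exact lt_of_pow_lt_pow_left₀ 2 (norm_nonneg _) h2

lemma habs_sub (x y : ℂ) : ‖x - y‖ ≤ ‖x‖ + ‖y‖ := by
  simpa [sub_eq_add_neg] using norm_add_le x (-y)

set_option maxHeartbeats 4000000 in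
theorem stmt4 (α : ℝ) (hα : 1 < α ∧ α ≤ 2) (f : ℂ → ℂ)
    (hf : IsConcaveUnivalent α f) (lam : ℝ)
    (hlam : lam ≤ 2 * (α - 3) / (3 * (α - 1))) :
    ‖iteratedDeriv 3 f 0 / 6 - (lam : ℂ) * (iteratedDeriv 2 f 0 / 2) ^ 2‖
      ≤ (2 * α ^ 2 + 1) / 3 - lam * α ^ 2 := by
  obtain ⟨hα1, hα2⟩ := hα
  obtain ⟨hdiff, hf0, hf'0, hfne, hPre⟩ := hf
  have hαC : ((α:ℂ)) ≠ 1 := by exact_mod_cast ne_of_gt hα1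
  have hαne : ((α:ℂ) - 1) ≠ 0 := sub_ne_zero.mpr hαC
  have honem : ∀ z ∈ unitDisk, (1:ℂ) - z ≠ 0 := by
    intro z hz h
    rw [sub_eq_zero] at h
    have hz' := mem_ball_zero_iff.mp hz
    rw [← h] at hz'
    simp at hz'
  have fA : AnalyticOnNhd ℂ f unitDisk := hdiff.analyticOnNhd isOpen_ball
  have F1A : AnalyticOnNhd ℂ (deriv f) unitDisk := fA.deriv
  have F2A : AnalyticOnNhd ℂ (deriv (deriv f)) unitDisk := F1A.deriv
  have F3A : AnalyticOnNhd ℂ (deriv (deriv (deriv f))) unitDisk := F2A.deriv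
  set m : ℂ → ℂ := fun z => (1 + z) / (1 - z) with hmdef
  have mA : AnalyticOnNhd ℂ m unitDisk := fun z hz =>
    (analyticAt_const.add analyticAt_id).div (analyticAt_const.sub analyticAt_id) (honem z hz)
  set P : ℂ → ℂ := Pfun α f with hPdef
  have PA : AnalyticOnNhd ℂ P unitDisk := by
    intro z hz
    rw [hPdef]
    exact analyticAt_const.mul
      (((analyticAt_const.mul ((analyticAt_const.add analyticAt_id).div
          (analyticAt_const.sub analyticAt_id) (honem z hz))).sub analyticAt_const).sub
        ((analyticAt_id.mul (F2A z hz)).div (F1A z hz) (hfne z hz)))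
  set g : ℂ → ℂ := fun z => ((α:ℂ)+1)/2 * m z - 1 - ((α:ℂ)-1)/2 * P z with hgdef
  have gA : AnalyticOnNhd ℂ g unitDisk := fun z hz =>
    ((analyticAt_const.mul (mA z hz)).sub analyticAt_const).sub
      (analyticAt_const.mul (PA z hz))
  have hrel : ∀ z ∈ unitDisk, z * deriv (deriv f) z = g z * deriv f z := by
    intro z hz
    have hgz : g z = z * deriv (deriv f) z / deriv f z := by
      rw [hgdef, hPdef]
      simp only [Pfun]
      have hmz : (1 + z) / (1 - z) = m z := rfl
      rw [hmz]
      have hc : ((α:ℂ)-1)/2 * (2/((α:ℂ)-1)) = 1 := by field_simp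
      rw [← mul_assoc, hc, one_mul]
      ring
    rw [hgz, div_mul_cancel₀ _ (hfne z hz)]
  have hrelE : (fun z => z * deriv (deriv f) z) =ᶠ[𝓝 (0:ℂ)] fun z => g z * deriv f z :=
    eventuallyEq_of_mem unitDisk_mem_nhds fun z hz => hrel z hz
  have hidA : AnalyticOnNhd ℂ (fun z : ℂ => z) unitDisk := fun z _ => analyticAt_id
  have hderiv_id : deriv (fun w : ℂ => w) = fun _ => (1:ℂ) := deriv_id''
  have hdd_id : deriv (deriv (fun w : ℂ => w)) 0 = 0 := by rw [hderiv_id]; simp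
  have hg0 : g 0 = 0 := by
    have h00 := hrel 0 mem0
    rw [hf'0] at h00
    simpa using h00.symm
  -- first derivative of relation R1
  have e1a : deriv (fun z => z * deriv (deriv f) z) 0
      = deriv (fun w : ℂ => w) 0 * deriv (deriv f) 0 + 0 * deriv (deriv (deriv f)) 0 :=
    mulD1 hidA F2A
  have e1b : deriv (fun z => g z * deriv f z) 0
      = deriv g 0 * deriv f 0 + g 0 * deriv (deriv f) 0 := mulD1 gA F1A
  have e1 : deriv (deriv f) 0 = deriv g 0 := by
    have h := hrelE.deriv_eq
    rw [e1a, e1b] at h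
    simp only [hderiv_id, hf'0, hg0, one_mul, mul_one, zero_mul, mul_zero, add_zero] at h
    exact h
  -- second derivative of relation R1
  have e2a : deriv (deriv (fun z => z * deriv (deriv f) z)) 0
      = deriv (deriv (fun w : ℂ => w)) 0 * deriv (deriv f) 0
        + 2 * deriv (fun w : ℂ => w) 0 * deriv (deriv (deriv f)) 0
        + 0 * deriv (deriv (deriv (deriv f))) 0 := mulD2 hidA F2A
  have e2b : deriv (deriv (fun z => g z * deriv f z)) 0
      = deriv (deriv g) 0 * deriv f 0 + 2 * deriv g 0 * deriv (deriv f) 0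
        + g 0 * deriv (deriv (deriv f)) 0 := mulD2 gA F1A
  have e2 : 2 * deriv (deriv (deriv f)) 0
      = deriv (deriv g) 0 + 2 * deriv g 0 * deriv (deriv f) 0 := by
    have h := hrelE.deriv.deriv_eq
    rw [e2a, e2b] at h
    rw [hdd_id] at h
    simp only [hderiv_id, hf'0, hg0, one_mul, mul_one, zero_mul, mul_zero, add_zero,
      zero_add] at h
    exact h
  -- m facts
  have hm0 : m 0 = 1 := by simp [hmdef]
  have hvA : AnalyticOnNhd ℂ (fun z : ℂ => 1 - z) unitDisk := fun z _ =>
    analyticAt_const.sub analyticAt_id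
  have hwA : AnalyticOnNhd ℂ (fun z : ℂ => 1 + z) unitDisk := fun z _ =>
    analyticAt_const.add analyticAt_id
  have hm_rel : (fun z => m z * (1 - z)) =ᶠ[𝓝 (0:ℂ)] fun z => 1 + z :=
    eventuallyEq_of_mem unitDisk_mem_nhds fun z hz => div_mul_cancel₀ _ (honem z hz)
  have hv1 : deriv (fun z : ℂ => 1 - z) 0 = -1 := by
    simpa using ((hasDerivAt_id (0:ℂ)).const_sub (1:ℂ)).deriv
  have hw1 : deriv (fun z : ℂ => 1 + z) 0 = 1 := by
    simpa using ((hasDerivAt_id (0:ℂ)).const_add (1:ℂ)).deriv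
  have hvfun : deriv (fun z : ℂ => 1 - z) = fun _ => (-1:ℂ) :=
    funext fun z => by simpa using ((hasDerivAt_id z).const_sub (1:ℂ)).deriv
  have hwfun : deriv (fun z : ℂ => 1 + z) = fun _ => (1:ℂ) :=
    funext fun z => by simpa using ((hasDerivAt_id z).const_add (1:ℂ)).deriv
  have hv2 : deriv (deriv (fun z : ℂ => 1 - z)) 0 = 0 := by rw [hvfun]; simp
  have hw2 : deriv (deriv (fun z : ℂ => 1 + z)) 0 = 0 := by rw [hwfun]; simp
  have hm1 : deriv m 0 = 2 := by
    have h := hm_rel.deriv_eq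
    rw [mulD1 mA hvA, hm0, hv1, hw1] at h
    linear_combination h
  have hm2 : deriv (deriv m) 0 = 4 := by
    have h := hm_rel.deriv.deriv_eq
    rw [mulD2 mA hvA, hm0, hm1, hv1, hv2, hw2] at h
    linear_combination h
  -- g derivatives
  have hg1 : deriv g 0 = ((α:ℂ)+1)/2 * deriv m 0 - ((α:ℂ)-1)/2 * deriv P 0 := by
    rw [hgdef]; exact combD1 mA PA _ _ _
  have hg2 : deriv (deriv g) 0
      = ((α:ℂ)+1)/2 * deriv (deriv m) 0 - ((α:ℂ)-1)/2 * deriv (deriv P) 0 := by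
    rw [hgdef]; exact combD2 mA PA _ _ _
  -- P value at 0
  have hP0 : P 0 = 1 := by
    rw [hgdef] at hg0
    simp only [hm0] at hg0
    have h2 : ((α:ℂ)-1) * P 0 = ((α:ℂ)-1) * 1 := by linear_combination (-2 : ℂ) * hg0
    exact mul_left_cancel₀ hαne h2
  -- the Carathéodory transform ω and its dslope ψ
  have hPne : ∀ z ∈ unitDisk, P z + 1 ≠ 0 := by
    intro z hz h
    have hre := hPre z hz
    have hPz : P z = -1 := by linear_combination h
    rw [hPz] at hre
    norm_num at hre
  set ω : ℂ → ℂ := fun z => (P z - 1) / (P z + 1) with hωdef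
  have ωA : AnalyticOnNhd ℂ ω unitDisk := fun z hz =>
    ((PA z hz).sub analyticAt_const).div ((PA z hz).add analyticAt_const) (hPne z hz)
  have hω0 : ω 0 = 0 := by rw [hωdef]; simp [hP0]
  have hPaddA : AnalyticOnNhd ℂ (fun z => P z + 1) unitDisk := fun z hz =>
    (PA z hz).add analyticAt_const
  have hωrel : (fun z => ω z * (P z + 1)) =ᶠ[𝓝 (0:ℂ)] fun z => P z - 1 :=
    eventuallyEq_of_mem unitDisk_mem_nhds fun z hz => div_mul_cancel₀ _ (hPne z hz)
  have hPadd1 : deriv (fun z => P z + 1) 0 = deriv P 0 := deriv_add_const 1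
  have hPaddfun : deriv (fun z => P z + 1) = deriv P := deriv_add_const' 1
  have hPadd2 : deriv (deriv (fun z => P z + 1)) 0 = deriv (deriv P) 0 := by rw [hPaddfun]
  have hPsub1 : deriv (fun z => P z - 1) 0 = deriv P 0 := deriv_sub_const 1
  have hPsubfun : deriv (fun z => P z - 1) = deriv P := funext fun z => deriv_sub_const 1
  have f1 : deriv ω 0 * 2 = deriv P 0 := by
    have h := hωrel.deriv_eq
    rw [mulD1 ωA hPaddA, hPadd1, hPsub1, hP0, hω0] at h
    linear_combination h
  have f2 : deriv (deriv ω) 0 * 2 + 2 * deriv ω 0 * deriv P 0 = deriv (deriv P) 0 := by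
    have h := hωrel.deriv.deriv_eq
    rw [hPsubfun] at h
    rw [mulD2 ωA hPaddA, hPadd1, hPadd2, hP0, hω0] at h
    linear_combination h
  set ψ : ℂ → ℂ := dslope ω 0 with hψdef
  have hψd : DifferentiableOn ℂ ψ unitDisk := by
    rw [hψdef]
    exact (differentiableOn_dslope unitDisk_mem_nhds).mpr ωA.differentiableOn
  have ψA : AnalyticOnNhd ℂ ψ unitDisk := hψd.analyticOnNhd isOpen_ball
  have hωψ : ω = fun z => z * ψ z := by
    funext z
    have h := sub_smul_dslope ω 0 z
    rw [← hψdef, hω0, sub_zero, sub_zero, smul_eq_mul] at h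
    exact h.symm
  have hca : deriv (fun z => z * ψ z) 0 = deriv (fun w : ℂ => w) 0 * ψ 0 + 0 * deriv ψ 0 :=
    mulD1 hidA ψA
  have hc1 : deriv ω 0 = ψ 0 := by
    rw [hωψ, hca, hderiv_id]
    simp
  have hcb : deriv (deriv (fun z => z * ψ z)) 0
      = deriv (deriv (fun w : ℂ => w)) 0 * ψ 0 + 2 * deriv (fun w : ℂ => w) 0 * deriv ψ 0
        + 0 * deriv (deriv ψ) 0 := mulD2 hidA ψA
  have hc2eq : deriv (deriv ω) 0 = 2 * deriv ψ 0 := by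
    rw [hωψ, hcb, hdd_id, hderiv_id]
    simp
  -- Schwarz bound on ψ
  have hωmaps : Set.MapsTo ω unitDisk (ball (ω 0) 1) := by
    intro z hz
    rw [hω0, mem_ball_zero_iff]
    have h1 : ‖P z - 1‖ < ‖P z + 1‖ := abs_sub_one_lt (hPre z hz)
    have h2 : 0 < ‖P z + 1‖ := norm_pos_iff.mpr (hPne z hz)
    show ‖(P z - 1) / (P z + 1)‖ < 1
    rw [norm_div]
    exact (div_lt_one h2).mpr h1
  have hψle : ∀ z ∈ unitDisk, ‖ψ z‖ ≤ 1 := by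
    intro z hz
    have h := Complex.norm_dslope_le_div_of_mapsTo_ball (c := 0) (R₁ := 1) (R₂ := 1)
      ωA.differentiableOn (hωmaps.mono_right ball_subset_closedBall) hz
    rw [← hψdef] at h
    simpa using h
  have hx1 : ‖ψ 0‖ ≤ 1 := hψle 0 mem0
  have hc2b : ‖deriv ψ 0‖ ≤ 1 - ‖ψ 0‖^2 := by
    by_cases hcase : ∃ z ∈ unitDisk, ‖ψ z‖ = 1
    · obtain ⟨z0, hz0, hz0e⟩ := hcase
      have hmax : IsMaxOn (norm ∘ ψ) unitDisk z0 := by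
        apply isMaxOn_iff.mpr
        intro z hz
        simp only [Function.comp_apply, hz0e]
        exact hψle z hz
      have heq := Complex.eqOn_of_isPreconnected_of_isMaxOn_norm
        (convex_ball (0:ℂ) 1).isPreconnected isOpen_ball hψd hz0 hmax
      have hψ00 : ψ 0 = ψ z0 := heq mem0
      have hdψ : deriv ψ 0 = 0 := by
        have hev : ψ =ᶠ[𝓝 (0:ℂ)] fun _ => ψ z0 :=
          eventuallyEq_of_mem unitDisk_mem_nhds fun z hz => heq hz
        rw [hev.deriv_eq, deriv_const]
      rw [hdψ, hψ00, hz0e]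
      simp
    · push_neg at hcase
      have hlt : ∀ z ∈ unitDisk, ‖ψ z‖ < 1 := fun z hz =>
        lt_of_le_of_ne (hψle z hz) (hcase z hz)
      have ha : ‖ψ 0‖ < 1 := hlt 0 mem0
      have hnsa : normSq (ψ 0) < 1 := by
        rw [← Complex.sq_norm]; nlinarith [norm_nonneg (ψ 0)]
      have hden : ∀ z ∈ unitDisk, (1:ℂ) - (starRingEnd ℂ) (ψ 0) * ψ z ≠ 0 := by
        intro z hz
        have hk := key_normSq (ψ 0) (ψ z)
        have h2 : normSq (ψ z) < 1 := by
          rw [← Complex.sq_norm]; nlinarith [norm_nonneg (ψ z), hlt z hz]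
        have h3 : 0 < normSq (1 - (starRingEnd ℂ) (ψ 0) * ψ z) := by
          have hp := mul_pos (by linarith : (0:ℝ) < 1 - normSq (ψ 0))
            (by linarith : (0:ℝ) < 1 - normSq (ψ z))
          linarith [normSq_nonneg (ψ z - ψ 0)]
        exact normSq_pos.mp h3
      set Φ : ℂ → ℂ := fun z => (ψ z - ψ 0) / (1 - (starRingEnd ℂ) (ψ 0) * ψ z) with hΦdef
      have hΦdiff : DifferentiableOn ℂ Φ unitDisk := by
        intro z hz
        apply DifferentiableWithinAt.div
        · exact (hψd z hz).sub (differentiableWithinAt_const _)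
        · exact (differentiableWithinAt_const _).sub ((hψd z hz).const_mul _)
        · exact hden z hz
      have hΦ0 : Φ 0 = 0 := by rw [hΦdef]; simp
      have hΦmaps : Set.MapsTo Φ unitDisk (ball (0:ℂ) 1) := by
        intro z hz
        rw [mem_ball_zero_iff]
        have hk := key_normSq (ψ 0) (ψ z)
        have h2 : normSq (ψ z) < 1 := by
          rw [← Complex.sq_norm]; nlinarith [norm_nonneg (ψ z), hlt z hz]
        have h4 : normSq (ψ z - ψ 0) < normSq (1 - (starRingEnd ℂ) (ψ 0) * ψ z) := by
          have hp := mul_pos (by linarith : (0:ℝ) < 1 - normSq (ψ 0))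
            (by linarith : (0:ℝ) < 1 - normSq (ψ z))
          linarith
        have h5 : ‖ψ z - ψ 0‖ < ‖1 - (starRingEnd ℂ) (ψ 0) * ψ z‖ := by
          apply lt_of_pow_lt_pow_left₀ 2 (norm_nonneg _)
          rw [Complex.sq_norm, Complex.sq_norm]; exact h4
        have h6 : 0 < ‖1 - (starRingEnd ℂ) (ψ 0) * ψ z‖ :=
          norm_pos_iff.mpr (hden z hz)
        show ‖(ψ z - ψ 0) / (1 - (starRingEnd ℂ) (ψ 0) * ψ z)‖ < 1
        rw [norm_div]
        exact (div_lt_one h6).mpr h5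
      have hψ0' : HasDerivAt ψ (deriv ψ 0) 0 := (ψA 0 mem0).differentiableAt.hasDerivAt
      have hΦder : HasDerivAt Φ
          ((deriv ψ 0 * (1 - (starRingEnd ℂ) (ψ 0) * ψ 0) -
            (ψ 0 - ψ 0) * -((starRingEnd ℂ) (ψ 0) * deriv ψ 0)) /
            (1 - (starRingEnd ℂ) (ψ 0) * ψ 0)^2) 0 := by
        rw [hΦdef]
        exact (hψ0'.sub_const (ψ 0)).div
          ((hψ0'.const_mul ((starRingEnd ℂ) (ψ 0))).const_sub 1) (hden 0 mem0)
      have hdd0 := hden 0 mem0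
      have hΦd0 : deriv Φ 0 = deriv ψ 0 / (1 - (starRingEnd ℂ) (ψ 0) * ψ 0) := by
        rw [hΦder.deriv, sub_self, zero_mul, sub_zero, pow_two]
        rw [div_eq_div_iff (mul_ne_zero hdd0 hdd0) hdd0]
        ring
      have hSch : ‖deriv Φ 0‖ ≤ 1 :=
        Complex.norm_deriv_le_one_of_mapsTo_ball (c := 0) (R := 1) hΦdiff
          (by rw [hΦ0]; exact hΦmaps.mono_right ball_subset_closedBall) one_pos
      rw [hΦd0] at hSch
      have hdreal : (1:ℂ) - (starRingEnd ℂ) (ψ 0) * ψ 0 = ((1 - normSq (ψ 0) : ℝ) : ℂ) := by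
        rw [mul_comm, Complex.mul_conj]
        push_cast
        ring
      rw [hdreal, norm_div, Complex.norm_real, Real.norm_eq_abs,
        abs_of_pos (by linarith : (0:ℝ) < 1 - normSq (ψ 0))] at hSch
      have h7 := (div_le_one (by linarith : (0:ℝ) < 1 - normSq (ψ 0))).mp hSch
      rw [Complex.sq_norm]
      exact h7
  -- coefficient relations
  have hp1 : deriv P 0 = 2 * ψ 0 := by rw [← f1, hc1]; ring
  have hp2 : deriv (deriv P) 0 = 4 * deriv ψ 0 + 4 * ψ 0^2 := by
    rw [← f2, hc2eq, hc1, hp1]; ring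
  have hF20 : deriv (deriv f) 0 = ((α:ℂ)+1) - ((α:ℂ)-1) * ψ 0 := by
    rw [e1, hg1, hm1, hp1]; ring
  have hF30 : deriv (deriv (deriv f)) 0
      = ((α:ℂ)+1) - ((α:ℂ)-1) * (deriv ψ 0 + ψ 0^2)
        + (((α:ℂ)+1) - ((α:ℂ)-1) * ψ 0)^2 := by
    have h := e2
    rw [hg2, hm2, hp2, ← e1, hF20] at h
    linear_combination h / 2
  have h3d : iteratedDeriv 3 f = deriv (deriv (deriv f)) := by
    rw [show (3:ℕ) = 2+1 from rfl, iteratedDeriv_succ, show (2:ℕ) = 1+1 from rfl,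
      iteratedDeriv_succ, iteratedDeriv_one]
  have h2d : iteratedDeriv 2 f = deriv (deriv f) := by
    rw [show (2:ℕ) = 1+1 from rfl, iteratedDeriv_succ, iteratedDeriv_one]
  rw [h3d, h2d, hF30, hF20]
  set x := ‖ψ 0‖ with hxdef
  set y := ‖deriv ψ 0‖ with hydef
  set τ : ℝ := 1/6 - lam/4 with hτdef
  have hαpos : 0 < α - 1 := by linarith
  have hτge : 1/3 ≤ τ * (α - 1) := by
    have h2 : lam * (α - 1) ≤ 2*(α-3)/3 := by
      have h3 := mul_le_mul_of_nonneg_right hlam (le_of_lt hαpos)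
      have h4 : 2*(α-3)/(3*(α-1)) * (α-1) = 2*(α-3)/3 := by
        field_simp
      rw [h4] at h3
      exact h3
    rw [hτdef]
    nlinarith [h2]
  have hτpos : 0 < τ := by
    have hneg : 2*(α-3)/(3*(α-1)) < 0 :=
      div_neg_of_neg_of_pos (by linarith) (by linarith)
    rw [hτdef]
    linarith
  set K0 : ℝ := τ*(α+1)^2 + (α+1)/6 with hK0
  set K1 : ℝ := 2*τ*(α+1)*(α-1) with hK1
  set K2 : ℝ := (α-1)*(τ*(α-1) - 1/6) with hK2
  set K3 : ℝ := (α-1)/6 with hK3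
  have hap1 : (0:ℝ) < (α+1)^2 := by positivity
  have hK0n : 0 ≤ K0 := by rw [hK0]; nlinarith [mul_pos hτpos hap1]
  have hK1n : 0 ≤ K1 := by
    rw [hK1]
    nlinarith [mul_pos (mul_pos hτpos (by linarith : (0:ℝ) < α+1)) hαpos]
  have hK2n : 0 ≤ K2 := by
    rw [hK2]
    exact mul_nonneg hαpos.le (by linarith)
  have hK3n : 0 ≤ K3 := by rw [hK3]; linarith
  have hid : (((α:ℂ)+1) - ((α:ℂ)-1) * (deriv ψ 0 + ψ 0^2)
        + (((α:ℂ)+1) - ((α:ℂ)-1) * ψ 0)^2) / 6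
      - (lam:ℂ) * ((((α:ℂ)+1) - ((α:ℂ)-1) * ψ 0) / 2)^2
      = ((K0:ℝ):ℂ) - ((K1:ℝ):ℂ) * ψ 0 + ((K2:ℝ):ℂ) * ψ 0^2 - ((K3:ℝ):ℂ) * deriv ψ 0 := by
    rw [hK0, hK1, hK2, hK3, hτdef]
    push_cast
    ring
  rw [hid]
  have s1 := habs_sub (((K0:ℝ):ℂ) - ((K1:ℝ):ℂ) * ψ 0 + ((K2:ℝ):ℂ) * ψ 0^2)
    (((K3:ℝ):ℂ) * deriv ψ 0)
  have s2 := norm_add_le (((K0:ℝ):ℂ) - ((K1:ℝ):ℂ) * ψ 0) (((K2:ℝ):ℂ) * ψ 0^2)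
  have s3 := habs_sub ((K0:ℝ):ℂ) (((K1:ℝ):ℂ) * ψ 0)
  have e0 : ‖((K0:ℝ):ℂ)‖ = K0 := by
    rw [Complex.norm_real, Real.norm_eq_abs]; exact _root_.abs_of_nonneg hK0n
  have eK1 : ‖((K1:ℝ):ℂ) * ψ 0‖ = K1 * x := by
    rw [norm_mul, Complex.norm_real, Real.norm_eq_abs, _root_.abs_of_nonneg hK1n]
  have eK2 : ‖((K2:ℝ):ℂ) * ψ 0^2‖ = K2 * x^2 := by
    rw [norm_mul, norm_pow, Complex.norm_real, Real.norm_eq_abs, _root_.abs_of_nonneg hK2n]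
  have eK3 : ‖((K3:ℝ):ℂ) * deriv ψ 0‖ = K3 * y := by
    rw [norm_mul, Complex.norm_real, Real.norm_eq_abs, _root_.abs_of_nonneg hK3n]
  have t1 : ‖((K0:ℝ):ℂ) - ((K1:ℝ):ℂ) * ψ 0 + ((K2:ℝ):ℂ) * ψ 0^2
      - ((K3:ℝ):ℂ) * deriv ψ 0‖ ≤ K0 + K1 * x + K2 * x^2 + K3 * y := by
    linarith [s1, s2, s3, e0, eK1, eK2, eK3]
  refine le_trans t1 ?_
  have hxnn : 0 ≤ x := norm_nonneg _
  have hynn : 0 ≤ y := norm_nonneg _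
  have hx2 : 0 ≤ 1 - x^2 := by nlinarith
  have hfin1 : 0 ≤ K1 * (1 - x) := mul_nonneg hK1n (by linarith)
  have hfin2 : 0 ≤ (K2 - K3) * (1 - x^2) := by
    apply mul_nonneg _ hx2
    rw [hK2, hK3]
    nlinarith [mul_nonneg hαpos.le (by linarith : (0:ℝ) ≤ τ*(α-1) - 1/3)]
  have hfin3 : 0 ≤ K3 * (1 - x^2 - y) := mul_nonneg hK3n (by linarith [hc2b])
  have hsum : K0 + K1 + K2 = (2*α^2+1)/3 - lam*α^2 := by
    rw [hK0, hK1, hK2, hτdef]; ring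
  nlinarith [hfin1, hfin2, hfin3, hsum]
end
end

section
/- Let α ∈ (1,2], let f belong to Co(α) with Taylor coefficients a₂, a₃, and let λ be a real number with λ ≥ 2(α+2)/(3(α+1)). Then |a₃ − λa₂²| ≤ λα² − (2α²+1)/3. -/
open Complex Metric

noncomputable section

open Set


lemma coeff_two_eq {g : ℂ → ℂ} {p : FormalMultilinearSeries ℂ ℂ ℂ}
    (h : HasFPowerSeriesAt g p 0) : p.coeff 2 = deriv (deriv g) 0 / 2 := by
  obtain ⟨r, hr⟩ := h
  have := hr.factorial_smul (1 : ℂ) 2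
  rw [← iteratedDeriv_eq_iteratedFDeriv] at this
  have h2 : iteratedDeriv 2 g 0 = deriv (deriv g) 0 := by
    rw [iteratedDeriv_succ, iteratedDeriv_succ, iteratedDeriv_zero]
  rw [h2] at this
  have : (2 : ℂ) * p.coeff 2 = deriv (deriv g) 0 := by
    have hc : p.coeff 2 = p 2 fun _ => 1 := rfl
    rw [hc]
    simpa [Nat.factorial, nsmul_eq_mul] using this
  rw [← this]
  ring


lemma mobius_normSq (a u : ℂ) :
    normSq (1 - (starRingEnd ℂ) a * u) - normSq (u - a)
      = (1 - normSq a) * (1 - normSq u) := by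
  simp only [normSq_apply, Complex.sub_re, Complex.sub_im, Complex.mul_re, Complex.mul_im,
    Complex.conj_re, Complex.conj_im, Complex.one_re, Complex.one_im]
  ring

lemma schwarz_pick_center {h : ℂ → ℂ} (hd : DifferentiableOn ℂ h (ball 0 1))
    (hb : ∀ z ∈ ball (0:ℂ) 1, ‖h z‖ ≤ 1) :
    ‖deriv h 0‖ ≤ 1 - ‖h 0‖ ^ 2 := by
  by_cases hex : ∃ z ∈ ball (0:ℂ) 1, ‖h z‖ = 1
  · obtain ⟨z, hz, hz1⟩ := hex
    have hmax : IsMaxOn (norm ∘ h) (ball (0:ℂ) 1) z := by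
      intro y hy
      simp only [Function.comp_apply, Set.mem_setOf_eq, hz1]
      exact hb y hy
    have hconst : ∀ y ∈ ball (0:ℂ) 1, h y = h z := fun y hy =>
      Complex.eqOn_of_isPreconnected_of_isMaxOn_norm (convex_ball (0:ℂ) 1).isPreconnected
        isOpen_ball hd hz hmax hy
    have h0 : ‖h 0‖ = 1 := by
      rw [hconst 0 (mem_ball_self one_pos), hz1]
    have hderiv : deriv h 0 = 0 := by
      have hev : h =ᶠ[nhds (0:ℂ)] (fun _ => h z) := by
        filter_upwards [isOpen_ball.mem_nhds (mem_ball_self one_pos)] with y hy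
        exact hconst y hy
      rw [hev.deriv_eq, deriv_const]
    rw [hderiv, h0]
    simp
  · push_neg at hex
    have hlt : ∀ z ∈ ball (0:ℂ) 1, ‖h z‖ < 1 := fun z hz =>
      lt_of_le_of_ne (hb z hz) (hex z hz)
    set a : ℂ := h 0 with ha
    have haball : ‖a‖ < 1 := hlt 0 (mem_ball_self one_pos)
    have hna : normSq a < 1 := by rw [← Complex.sq_norm] at *; nlinarith [norm_nonneg a]
    have hden : ∀ u : ℂ, ‖u‖ < 1 → (1 - (starRingEnd ℂ) a * u) ≠ 0 := by
      intro u hu hzero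
      have h1 : (1 : ℂ) = (starRingEnd ℂ) a * u := by linear_combination hzero
      have : ‖(starRingEnd ℂ) a * u‖ < 1 := by
        rw [norm_mul, Complex.norm_conj]
        nlinarith [norm_nonneg u, norm_nonneg a]
      rw [← h1] at this; simp at this
    set g : ℂ → ℂ := fun z => (h z - a) / (1 - (starRingEnd ℂ) a * h z) with hg
    have hgd : DifferentiableOn ℂ g (ball 0 1) := by
      apply DifferentiableOn.div
      · exact hd.sub (differentiableOn_const a)
      · exact (differentiableOn_const (1:ℂ)).sub ((differentiableOn_const _).mul hd)
      · intro z hz; exact hden (h z) (hlt z hz)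
    have hg0 : g 0 = 0 := by simp [hg, ← ha]
    have hmaps : MapsTo g (ball 0 1) (ball 0 1) := by
      intro z hz
      rw [mem_ball_zero_iff]
      have hu := hlt z hz
      have hnu : normSq (h z) < 1 := by
        rw [← Complex.sq_norm] at *; nlinarith [norm_nonneg (h z)]
      have key := mobius_normSq a (h z)
      have hpos : 0 < normSq (1 - (starRingEnd ℂ) a * h z) := by
        rw [Complex.normSq_pos]; exact hden (h z) hu
      have hlt2 : normSq (h z - a) < normSq (1 - (starRingEnd ℂ) a * h z) := by nlinarith
      simp only [hg, norm_div]
      rw [div_lt_one (norm_pos_iff.mpr (hden _ hu))]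
      have := Complex.sq_norm (h z - a)
      have := Complex.sq_norm (1 - (starRingEnd ℂ) a * h z)
      nlinarith [norm_nonneg (h z - a), norm_nonneg (1 - (starRingEnd ℂ) a * h z)]
    -- Schwarz lemma for g
    have hsch : ‖deriv g 0‖ ≤ 1 :=
      Complex.norm_deriv_le_one_of_mapsTo_ball hgd
        (by rw [hg0]; exact hmaps.mono_right ball_subset_closedBall) one_pos
    -- compute deriv g 0
    have hhd : HasDerivAt h (deriv h 0) 0 :=
      (hd.differentiableAt (isOpen_ball.mem_nhds (mem_ball_self one_pos))).hasDerivAt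
    have hd0 : (1 - (starRingEnd ℂ) a * a) ≠ 0 := hden a haball
    have hgder : HasDerivAt g
        ((deriv h 0 * (1 - (starRingEnd ℂ) a * a) -
          (a - a) * (0 - ((starRingEnd ℂ) a * deriv h 0))) / (1 - (starRingEnd ℂ) a * a) ^ 2) 0 := by
      have hnum : HasDerivAt (fun z => h z - a) (deriv h 0) 0 := hhd.sub_const a
      have hden' : HasDerivAt (fun z => 1 - (starRingEnd ℂ) a * h z)
          (0 - (starRingEnd ℂ) a * deriv h 0) 0 :=
        (hasDerivAt_const 0 (1:ℂ)).sub ((hhd.const_mul ((starRingEnd ℂ) a)))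
      exact hnum.div hden' hd0
    have hdg0 : deriv g 0 = deriv h 0 / (1 - (starRingEnd ℂ) a * a) := by
      rw [hgder.deriv]
      field_simp
      ring
    have hconj : (starRingEnd ℂ) a * a = (normSq a : ℂ) := by
      rw [mul_comm, Complex.mul_conj]
    rw [hdg0, hconj] at hsch
    have habs : ‖(1 : ℂ) - (normSq a : ℂ)‖ = 1 - normSq a := by
      rw [← Complex.ofReal_one, ← Complex.ofReal_sub, Complex.norm_real, Real.norm_eq_abs, abs_of_pos (by linarith)]
    rw [norm_div, habs, div_le_one (by linarith)] at hsch
    calc ‖deriv h 0‖ ≤ 1 - normSq a := hsch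
    _ = 1 - ‖h 0‖ ^ 2 := by rw [← Complex.sq_norm, ← ha]

lemma carath {P : ℂ → ℂ} (hP : DifferentiableOn ℂ P (ball 0 1)) (h0 : P 0 = 1)
    (hre : ∀ z ∈ ball (0:ℂ) 1, 0 < (P z).re) :
    ‖deriv P 0‖ ≤ 2 ∧
      ‖deriv (deriv P) 0 - (deriv P 0) ^ 2‖ ≤ 4 - ‖deriv P 0‖ ^ 2 := by
  have hne : ∀ z ∈ ball (0:ℂ) 1, P z + 1 ≠ 0 := by
    intro z hz hzero
    have h1 : (P z).re = -1 := by
      have : (P z + 1).re = 0 := by rw [hzero]; simp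
      simp [Complex.add_re] at this; linarith
    have := hre z hz; linarith
  set w : ℂ → ℂ := fun z => (P z - 1) / (P z + 1) with hw
  have hwd : DifferentiableOn ℂ w (ball 0 1) :=
    (hP.sub (differentiableOn_const 1)).div (hP.add (differentiableOn_const 1)) hne
  have hw0 : w 0 = 0 := by simp [hw, h0]
  have hwlt : ∀ z ∈ ball (0:ℂ) 1, ‖w z‖ < 1 := by
    intro z hz
    have key : normSq (P z + 1) - normSq (P z - 1) = 4 * (P z).re := by
      simp only [normSq_apply, Complex.add_re, Complex.add_im, Complex.sub_re, Complex.sub_im,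
        Complex.one_re, Complex.one_im]
      ring
    have hpos := hre z hz
    have h2 : normSq (P z - 1) < normSq (P z + 1) := by linarith
    simp only [hw, norm_div]
    rw [div_lt_one (norm_pos_iff.mpr (hne z hz))]
    have e1 := Complex.sq_norm (P z - 1)
    have e2 := Complex.sq_norm (P z + 1)
    nlinarith [norm_nonneg (P z - 1), norm_nonneg (P z + 1)]
  set c1 := deriv P 0 with hc1
  set c2 := deriv (deriv P) 0 with hc2
  -- derivatives of w
  have hPd : ∀ z ∈ ball (0:ℂ) 1, HasDerivAt P (deriv P z) z := fun z hz =>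
    (hP.differentiableAt (isOpen_ball.mem_nhds hz)).hasDerivAt
  have hwformula : ∀ z ∈ ball (0:ℂ) 1,
      HasDerivAt w ((deriv P z * (P z + 1) - (P z - 1) * deriv P z) / (P z + 1) ^ 2) z := by
    intro z hz
    exact ((hPd z hz).sub_const 1).div ((hPd z hz).add_const 1) (hne z hz)
  have hwdz : ∀ z ∈ ball (0:ℂ) 1,
      deriv w z = 2 * deriv P z / (P z + 1) ^ 2 := by
    intro z hz
    rw [(hwformula z hz).deriv]
    have := hne z hz
    field_simp
    ring
  have hdw0 : deriv w 0 = c1 / 2 := by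
    rw [hwdz 0 (mem_ball_self one_pos), h0, hc1]
    norm_num
    ring
  -- second derivative of w at 0
  have hPana : AnalyticOnNhd ℂ P (ball 0 1) := hP.analyticOnNhd isOpen_ball
  have hP'd : DifferentiableAt ℂ (deriv P) 0 :=
    (hPana.deriv 0 (mem_ball_self one_pos)).differentiableAt
  have hG : HasDerivAt (fun z => 2 * deriv P z / (P z + 1) ^ 2)
      ((2 * c2 * (P 0 + 1) ^ 2 - 2 * c1 * (2 * (P 0 + 1) ^ 1 * c1)) / ((P 0 + 1) ^ 2) ^ 2) 0 := by
    have hn : HasDerivAt (fun z => 2 * deriv P z) (2 * c2) 0 := hP'd.hasDerivAt.const_mul 2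
    have hden : HasDerivAt (fun z => (P z + 1) ^ 2) (2 * (P 0 + 1) ^ 1 * c1) 0 := by
      simpa using ((hPd 0 (mem_ball_self one_pos)).add_const 1).fun_pow 2
    exact hn.div hden (by rw [h0]; norm_num)
  have hdw2 : deriv (deriv w) 0 = (c2 - c1 ^ 2) / 2 := by
    have hev : deriv w =ᶠ[nhds (0:ℂ)] fun z => 2 * deriv P z / (P z + 1) ^ 2 := by
      filter_upwards [isOpen_ball.mem_nhds (mem_ball_self one_pos)] with y hy
      exact hwdz y hy
    rw [hev.deriv_eq, hG.deriv, h0, hc1, hc2]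
    have : ((1:ℂ) + 1) ^ 2 = 4 := by norm_num
    field_simp
    ring
  obtain ⟨q, hq⟩ := hwd.analyticOnNhd isOpen_ball 0 (mem_ball_self one_pos)
  have hq2 : q.coeff 2 = (c2 - c1 ^ 2) / 4 := by
    rw [coeff_two_eq hq, hdw2]; ring
  have hqf := hq.has_fpower_series_dslope_fslope
  have hh0 : dslope w 0 0 = c1 / 2 := by rw [dslope_same, hdw0]
  have hdh0 : deriv (dslope w 0) 0 = (c2 - c1 ^ 2) / 4 := by
    have := hqf.deriv
    rw [this]
    have e1 : (q.fslope 1 fun _ => 1) = q.fslope.coeff 1 := rfl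
    rw [e1, FormalMultilinearSeries.coeff_fslope, hq2]
  have hmaps : Set.MapsTo w (ball 0 1) (ball (w 0) 1) := by
    intro z hz
    rw [hw0, mem_ball_zero_iff]
    exact hwlt z hz
  have hb : ∀ z ∈ ball (0:ℂ) 1, ‖dslope w 0 z‖ ≤ 1 := by
    intro z hz
    have := Complex.norm_dslope_le_div_of_mapsTo_ball hwd (hmaps.mono_right ball_subset_closedBall) hz
    simpa using this
  have hdd : DifferentiableOn ℂ (dslope w 0) (ball 0 1) :=
    (differentiableOn_dslope (isOpen_ball.mem_nhds (mem_ball_self one_pos))).mpr hwd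
  have hsp := schwarz_pick_center hdd hb
  rw [hdh0, hh0] at hsp
  have hb0 : ‖c1 / 2‖ ≤ 1 := by
    have := hb 0 (mem_ball_self one_pos)
    rwa [hh0] at this
  have e2 : ‖c1 / 2‖ = ‖c1‖ / 2 := by
    rw [norm_div]; simp
  have e3 : ‖(c2 - c1 ^ 2) / 4‖ = ‖c2 - c1 ^ 2‖ / 4 := by
    rw [norm_div]; simp [Complex.norm_ofNat]
  constructor
  · rw [e2] at hb0; linarith
  · rw [e2, e3] at hsp
    nlinarith [norm_nonneg c1]

lemma pfun_props (α : ℝ) (hα1 : 1 < α) (f : ℂ → ℂ) (hf : IsConcaveUnivalent α f) :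
    DifferentiableOn ℂ (Pfun α f) (ball 0 1) ∧
    Pfun α f 0 = 1 ∧
    deriv (Pfun α f) 0 = (2 / ((α:ℂ) - 1)) * (((α:ℂ) + 1) - iteratedDeriv 2 f 0) ∧
    deriv (deriv (Pfun α f)) 0 = (2 / ((α:ℂ) - 1)) *
      (2 * ((α:ℂ) + 1) - 2 * iteratedDeriv 3 f 0 + 2 * (iteratedDeriv 2 f 0) ^ 2) := by
  obtain ⟨hdf, hf0, hf1, hfne, hfre⟩ := hf
  have hUD : unitDisk = ball (0:ℂ) 1 := rfl
  rw [hUD] at hdf hfne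
  have h0D : (0:ℂ) ∈ ball (0:ℂ) 1 := mem_ball_self one_pos
  have hαne : ((α:ℂ) - 1) ≠ 0 := by
    rw [sub_ne_zero]
    exact_mod_cast hα1.ne'
  set C : ℂ := 2 / ((α:ℂ) - 1) with hC
  set K : ℂ := ((α:ℂ) + 1) / 2 with hK
  have hana : AnalyticOnNhd ℂ f (ball 0 1) := hdf.analyticOnNhd isOpen_ball
  set g : ℂ → ℂ := deriv f with hg
  set u : ℂ → ℂ := deriv (deriv f) with hu
  set v : ℂ → ℂ := deriv (deriv (deriv f)) with hv
  have hgana : AnalyticOnNhd ℂ g (ball 0 1) := hana.deriv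
  have huana : AnalyticOnNhd ℂ u (ball 0 1) := hgana.deriv
  have hvana : AnalyticOnNhd ℂ v (ball 0 1) := huana.deriv
  have hgat : ∀ z ∈ ball (0:ℂ) 1, HasDerivAt g (u z) z := fun z hz =>
    ((hgana z hz).differentiableAt).hasDerivAt
  have huat : ∀ z ∈ ball (0:ℂ) 1, HasDerivAt u (v z) z := fun z hz =>
    ((huana z hz).differentiableAt).hasDerivAt
  have hvat : HasDerivAt v (deriv v 0) 0 := ((hvana 0 h0D).differentiableAt).hasDerivAt
  have hone : ∀ z ∈ ball (0:ℂ) 1, (1 : ℂ) - z ≠ 0 := by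
    intro z hz h
    rw [mem_ball_zero_iff] at hz
    have : z = 1 := by linear_combination -h
    rw [this] at hz; simp at hz
  have hu20 : u 0 = iteratedDeriv 2 f 0 := by
    rw [iteratedDeriv_succ, iteratedDeriv_succ, iteratedDeriv_zero]
  have hv30 : v 0 = iteratedDeriv 3 f 0 := by
    rw [iteratedDeriv_succ, iteratedDeriv_succ, iteratedDeriv_succ, iteratedDeriv_zero]
  have hPeq : Pfun α f = fun z => C * (K * ((1 + z) / (1 - z)) - 1 - z * u z / g z) := rfl
  -- value at 0
  have hval : Pfun α f 0 = 1 := by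
    rw [hPeq]
    simp only [add_zero, zero_sub, sub_zero, zero_mul, zero_div, hC, hK]
    field_simp
    ring
  -- Moebius part derivative on the disk
  have hmz : ∀ z ∈ ball (0:ℂ) 1,
      HasDerivAt (fun z : ℂ => (1 + z) / (1 - z))
        ((1 * (1 - z) - (1 + z) * (-1)) / (1 - z) ^ 2) z := by
    intro z hz
    have h1 : HasDerivAt (fun z : ℂ => 1 + z) 1 z := by
      simpa using (hasDerivAt_id z).const_add (1:ℂ)
    have h2 : HasDerivAt (fun z : ℂ => 1 - z) (-1) z := by
      simpa using (hasDerivAt_id z).const_sub (1:ℂ)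
    exact h1.div h2 (hone z hz)
  -- Q part derivative on the disk
  have hQz : ∀ z ∈ ball (0:ℂ) 1,
      HasDerivAt (fun z : ℂ => z * u z / g z)
        (((1 * u z + z * v z) * g z - z * u z * u z) / (g z) ^ 2) z := by
    intro z hz
    have hn : HasDerivAt (fun z : ℂ => z * u z) (1 * u z + z * v z) z :=
      (hasDerivAt_id z).mul (huat z hz)
    exact hn.div (hgat z hz) (hfne z hz)
  have hPat : ∀ z ∈ ball (0:ℂ) 1, HasDerivAt (Pfun α f)
      (C * (K * ((1 * (1 - z) - (1 + z) * (-1)) / (1 - z) ^ 2) -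
        ((1 * u z + z * v z) * g z - z * u z * u z) / (g z) ^ 2)) z := by
    intro z hz
    rw [hPeq]
    exact ((((hmz z hz).const_mul K).sub_const 1).sub (hQz z hz)).const_mul C
  refine ⟨fun z hz => ((hPat z hz).differentiableAt).differentiableWithinAt, hval, ?_, ?_⟩
  · rw [(hPat 0 h0D).deriv, hf1, hu20, hK]
    norm_num
  · set F : ℂ → ℂ := fun z => C * (K * (2 / (1 - z) ^ 2) - ((u z + z * v z) / g z - z * (u z) ^ 2 / (g z) ^ 2)) with hF
    have hEq : ∀ z ∈ ball (0:ℂ) 1, deriv (Pfun α f) z = F z := by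
      intro z hz
      rw [(hPat z hz).deriv, hF]
      have h1 := hone z hz
      have h2 := hfne z hz
      field_simp
      ring
    have hev : deriv (Pfun α f) =ᶠ[nhds (0:ℂ)] F := by
      filter_upwards [isOpen_ball.mem_nhds h0D] with y hy using hEq y hy
    rw [Filter.EventuallyEq.deriv_eq hev]
    have hA : HasDerivAt (fun z : ℂ => 2 / (1 - z) ^ 2)
        ((0 * (1 - 0) ^ 2 - 2 * (2 * (1 - 0) ^ 1 * (-1))) / ((1 - 0) ^ 2) ^ 2) 0 := by
      have h2 : HasDerivAt (fun z : ℂ => 1 - z) (-1) 0 := by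
        simpa using (hasDerivAt_id (0:ℂ)).const_sub (1:ℂ)
      exact (hasDerivAt_const (0:ℂ) (2:ℂ)).div (h2.pow 2) (by norm_num)
    have hB : HasDerivAt (fun z : ℂ => (u z + z * v z) / g z)
        (((v 0 + (1 * v 0 + 0 * deriv v 0)) * g 0 - (u 0 + 0 * v 0) * u 0) / (g 0) ^ 2) 0 := by
      have hn : HasDerivAt (fun z : ℂ => u z + z * v z) (v 0 + (1 * v 0 + 0 * deriv v 0)) 0 :=
        (huat 0 h0D).add ((hasDerivAt_id 0).mul hvat)
      exact hn.div (hgat 0 h0D) (hfne 0 h0D)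
    have hCp : HasDerivAt (fun z : ℂ => z * (u z) ^ 2 / (g z) ^ 2)
        (((1 * (u 0) ^ 2 + 0 * (2 * (u 0) ^ 1 * v 0)) * (g 0) ^ 2 -
          0 * (u 0) ^ 2 * (2 * (g 0) ^ 1 * u 0)) / ((g 0) ^ 2) ^ 2) 0 := by
      have hn : HasDerivAt (fun z : ℂ => z * (u z) ^ 2)
          (1 * (u 0) ^ 2 + 0 * (2 * (u 0) ^ 1 * v 0)) 0 :=
        (hasDerivAt_id 0).mul ((huat 0 h0D).pow 2)
      exact hn.div ((hgat 0 h0D).pow 2) (by rw [hf1]; norm_num)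
    have hFat : HasDerivAt F (C * (K * (4:ℂ) - ((2 * v 0 - (u 0)^2) - (u 0)^2))) 0 := by
      have hcomb := (((hA.const_mul K).sub (hB.sub hCp))).const_mul C
      refine hcomb.congr_deriv ?_
      congr 1
      rw [hf1]
      norm_num
      ring
    rw [hFat.deriv, hu20, hv30, hK]
    ring

theorem stmt5 (α : ℝ) (hα : 1 < α ∧ α ≤ 2) (f : ℂ → ℂ)
    (hf : IsConcaveUnivalent α f) (lam : ℝ)
    (hlam : 2 * (α + 2) / (3 * (α + 1)) ≤ lam) :
    ‖iteratedDeriv 3 f 0 / 6 - (lam : ℂ) * (iteratedDeriv 2 f 0 / 2) ^ 2‖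
      ≤ lam * α ^ 2 - (2 * α ^ 2 + 1) / 3 := by
  obtain ⟨hα1, hα2⟩ := hα
  obtain ⟨hPd, hP0, hd1, hd2⟩ := pfun_props α hα1 f hf
  have hαne : ((α:ℂ) - 1) ≠ 0 := by
    rw [sub_ne_zero]; exact_mod_cast hα1.ne'
  have hre : ∀ z ∈ ball (0:ℂ) 1, 0 < (Pfun α f z).re := hf.2.2.2.2
  obtain ⟨h1, h2⟩ := carath hPd hP0 hre
  set c1 : ℂ := deriv (Pfun α f) 0 with hc1
  set c2 : ℂ := deriv (deriv (Pfun α f)) 0 with hc2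
  set i2 : ℂ := iteratedDeriv 2 f 0 with hi2
  set i3 : ℂ := iteratedDeriv 3 f 0 with hi3
  clear_value c1 c2 i2 i3
  clear hc1 hc2 hi2 hi3 hP0 hPd hre hf
  have e2 : i2 = ((α:ℂ) + 1) - ((α:ℂ) - 1) * c1 / 2 := by
    rw [div_mul_eq_mul_div, eq_div_iff hαne] at hd1
    linear_combination hd1 / 2
  have e3 : i3 = ((α:ℂ) + 1) + i2 ^ 2 - ((α:ℂ) - 1) * c2 / 4 := by
    rw [div_mul_eq_mul_div, eq_div_iff hαne] at hd2
    linear_combination hd2 / 4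
  have h3pos : (0:ℝ) < 3 * (α + 1) := by linarith
  rw [div_le_iff₀ h3pos] at hlam
  have hmupos : (0:ℝ) ≤ lam - 2/3 := by nlinarith
  have ha1 : (0:ℝ) ≤ α + 1 := by linarith
  have ha2 : (0:ℝ) ≤ α - 1 := by linarith
  have hS0n : (0:ℝ) ≤ (lam - 2/3) * (α+1)^2/4 - (α+1)/6 := by nlinarith
  have hS1n : (0:ℝ) ≤ (lam - 2/3) * (α+1) * (α-1)/4 := by
    have := mul_nonneg (mul_nonneg hmupos ha1) ha2
    linarith
  have hS2n : (0:ℝ) ≤ (lam - 2/3) * (α-1)^2/16 + (α-1)/24 := by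
    have := mul_nonneg hmupos (sq_nonneg (α-1))
    linarith
  have hS3n : (0:ℝ) ≤ (α-1)/24 := by linarith
  have key : i3 / 6 - (lam : ℂ) * (i2 / 2) ^ 2
      = -(((lam - 2/3) * (α+1)^2/4 - (α+1)/6 : ℝ) : ℂ)
        + (((lam - 2/3) * (α+1) * (α-1)/4 : ℝ) : ℂ) * c1
        - (((lam - 2/3) * (α-1)^2/16 + (α-1)/24 : ℝ) : ℂ) * c1 ^ 2
        - (((α-1)/24 : ℝ) : ℂ) * (c2 - c1 ^ 2) := by
    rw [e3, e2]
    push_cast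
    ring
  rw [key]
  have htn : 0 ≤ ‖c1‖ := norm_nonneg c1
  set t : ℝ := ‖c1‖ with ht
  have step1 : ‖-(((lam - 2/3) * (α+1)^2/4 - (α+1)/6 : ℝ) : ℂ)
        + (((lam - 2/3) * (α+1) * (α-1)/4 : ℝ) : ℂ) * c1
        - (((lam - 2/3) * (α-1)^2/16 + (α-1)/24 : ℝ) : ℂ) * c1 ^ 2
        - (((α-1)/24 : ℝ) : ℂ) * (c2 - c1 ^ 2)‖
      ≤ ((lam - 2/3) * (α+1)^2/4 - (α+1)/6) + ((lam - 2/3) * (α+1) * (α-1)/4) * t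
        + ((lam - 2/3) * (α-1)^2/16 + (α-1)/24) * t ^ 2
        + ((α-1)/24) * ‖c2 - c1 ^ 2‖ := by
    have a0 : ‖-(((lam - 2/3) * (α+1)^2/4 - (α+1)/6 : ℝ) : ℂ)‖
        = (lam - 2/3) * (α+1)^2/4 - (α+1)/6 := by
      rw [norm_neg, Complex.norm_real, Real.norm_eq_abs, _root_.abs_of_nonneg hS0n]
    have a1 : ‖(((lam - 2/3) * (α+1) * (α-1)/4 : ℝ) : ℂ) * c1‖
        = ((lam - 2/3) * (α+1) * (α-1)/4) * t := by
      rw [norm_mul, Complex.norm_real, Real.norm_eq_abs, _root_.abs_of_nonneg hS1n]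
    have a2 : ‖(((lam - 2/3) * (α-1)^2/16 + (α-1)/24 : ℝ) : ℂ) * c1 ^ 2‖
        = ((lam - 2/3) * (α-1)^2/16 + (α-1)/24) * t ^ 2 := by
      rw [norm_mul, norm_pow, Complex.norm_real, Real.norm_eq_abs, _root_.abs_of_nonneg hS2n]
    have a3 : ‖(((α-1)/24 : ℝ) : ℂ) * (c2 - c1 ^ 2)‖
        = ((α-1)/24) * ‖c2 - c1 ^ 2‖ := by
      rw [norm_mul, Complex.norm_real, Real.norm_eq_abs, _root_.abs_of_nonneg hS3n]
    calc ‖_‖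
        ≤ ‖-(((lam - 2/3) * (α+1)^2/4 - (α+1)/6 : ℝ) : ℂ)
            + (((lam - 2/3) * (α+1) * (α-1)/4 : ℝ) : ℂ) * c1
            - (((lam - 2/3) * (α-1)^2/16 + (α-1)/24 : ℝ) : ℂ) * c1 ^ 2‖
          + ‖(((α-1)/24 : ℝ) : ℂ) * (c2 - c1 ^ 2)‖ :=
          norm_sub_le _ _
      _ ≤ (‖-(((lam - 2/3) * (α+1)^2/4 - (α+1)/6 : ℝ) : ℂ)
            + (((lam - 2/3) * (α+1) * (α-1)/4 : ℝ) : ℂ) * c1‖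
          + ‖(((lam - 2/3) * (α-1)^2/16 + (α-1)/24 : ℝ) : ℂ) * c1 ^ 2‖)
          + ‖(((α-1)/24 : ℝ) : ℂ) * (c2 - c1 ^ 2)‖ := by
          gcongr
          exact norm_sub_le _ _
      _ ≤ ((‖-(((lam - 2/3) * (α+1)^2/4 - (α+1)/6 : ℝ) : ℂ)‖
            + ‖(((lam - 2/3) * (α+1) * (α-1)/4 : ℝ) : ℂ) * c1‖)
          + ‖(((lam - 2/3) * (α-1)^2/16 + (α-1)/24 : ℝ) : ℂ) * c1 ^ 2‖)
          + ‖(((α-1)/24 : ℝ) : ℂ) * (c2 - c1 ^ 2)‖ := by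
          gcongr
          exact norm_add_le _ _
      _ = _ := by rw [a0, a1, a2, a3]
  refine step1.trans ?_
  have hbd : ((α-1)/24) * ‖c2 - c1 ^ 2‖ ≤ ((α-1)/24) * (4 - t ^ 2) :=
    mul_le_mul_of_nonneg_left h2 hS3n
  have ht2 : t ≤ 2 := h1
  nlinarith [mul_nonneg (mul_nonneg hmupos ha2)
      (mul_nonneg (by linarith : (0:ℝ) ≤ 2 - t) (by nlinarith : (0:ℝ) ≤ 3*α + 1 + (α-1)*t/2)),
    mul_nonneg (mul_nonneg hmupos ha2) htn]
end
end

section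
/- Let α ∈ (1,2] and let f be the analytic function on 𝔻 with f(0) = 0 and f'(z) = (1+z)^{α−1}/(1−z)^{α+1} for z ∈ 𝔻 (principal branches of the powers; equivalently f(z) = (1/(2α))·[((1+z)/(1−z))^α − 1]). Then f belongs to Co(α), and its Taylor coefficients satisfy a₂ = α and a₃ = (2α²+1)/3; consequently |a₃ − λa₂²| = (2α²+1)/3 − λα² for every real λ ≤ 2(α−1)/(3α), and |a₃ − λa₂²| = λα² − (2α²+1)/3 for every real λ ≥ λ₂ = (4α² − 1 + √(8α²+1))/(6α²). -/
open Complex Metric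

noncomputable section

/- ## Auxiliary lemmas -/

lemma mem_disk' {z : ℂ} (hz : z ∈ unitDisk) : ‖z‖ < 1 := by
  simpa [unitDisk, mem_ball, Complex.dist_eq] using hz

lemma zero_mem_disk : (0 : ℂ) ∈ unitDisk := by
  simp [unitDisk, mem_ball]

lemma re_bound {z : ℂ} (hz : ‖z‖ < 1) : |z.re| < 1 :=
  lt_of_le_of_lt (Complex.abs_re_le_norm z) hz

lemma one_add_pos {z : ℂ} (hz : z ∈ unitDisk) : 0 < (1 + z).re := by
  have := re_bound (mem_disk' hz); simp [Complex.add_re]; linarith [abs_lt.mp this]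

lemma one_sub_pos' {z : ℂ} (hz : z ∈ unitDisk) : 0 < (1 - z).re := by
  have := re_bound (mem_disk' hz); simp [Complex.sub_re]; linarith [abs_lt.mp this]

lemma one_add_ne {z : ℂ} (hz : z ∈ unitDisk) : (1 + z) ≠ 0 := by
  intro h; have := one_add_pos hz; rw [h] at this; simp at this

lemma one_sub_ne {z : ℂ} (hz : z ∈ unitDisk) : (1 - z) ≠ 0 := by
  intro h; have := one_sub_pos' hz; rw [h] at this; simp at this

lemma cpow_ne {x w : ℂ} (hx : x ≠ 0) : x ^ w ≠ 0 := by
  rw [Complex.cpow_def_of_ne_zero hx]; exact Complex.exp_ne_zero _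

/-- the derivative function -/
def gfun (α : ℝ) (z : ℂ) : ℂ := (1 + z) ^ ((α : ℂ) - 1) / (1 - z) ^ ((α : ℂ) + 1)

def hfun (α : ℝ) (z : ℂ) : ℂ := ((α : ℂ) - 1) / (1 + z) + ((α : ℂ) + 1) / (1 - z)

lemma gfun_ne (α : ℝ) {z : ℂ} (hz : z ∈ unitDisk) : gfun α z ≠ 0 :=
  div_ne_zero (cpow_ne (one_add_ne hz)) (cpow_ne (one_sub_ne hz))

lemma gfun_hasDeriv (α : ℝ) {z : ℂ} (hz : z ∈ unitDisk) :
    HasDerivAt (gfun α) (gfun α z * hfun α z) z := by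
  have h1 : (1 + z) ≠ 0 := one_add_ne hz
  have h2 : (1 - z) ≠ 0 := one_sub_ne hz
  have hs1 : (1 + z) ∈ Complex.slitPlane := Complex.mem_slitPlane_iff.2 (Or.inl (one_add_pos hz))
  have hs2 : (1 - z) ∈ Complex.slitPlane := Complex.mem_slitPlane_iff.2 (Or.inl (one_sub_pos' hz))
  have hN : HasDerivAt (fun z : ℂ => (1 + z) ^ ((α : ℂ) - 1))
      (((α : ℂ) - 1) * (1 + z) ^ ((α : ℂ) - 1 - 1) * 1) z :=
    HasDerivAt.cpow_const ((hasDerivAt_id z).const_add 1) hs1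
  have hD : HasDerivAt (fun z : ℂ => (1 - z) ^ ((α : ℂ) + 1))
      (((α : ℂ) + 1) * (1 - z) ^ ((α : ℂ) + 1 - 1) * (-1)) z :=
    HasDerivAt.cpow_const ((hasDerivAt_id z).const_sub 1) hs2
  have hD0 : (1 - z) ^ ((α : ℂ) + 1) ≠ 0 := cpow_ne h2
  have := hN.div hD hD0
  refine HasDerivAt.congr_deriv (this : HasDerivAt (gfun α) _ z) ?_
  have e1 : (1 + z) ^ ((α : ℂ) - 1 - 1) = (1 + z) ^ ((α : ℂ) - 1) / (1 + z) := by
    rw [Complex.cpow_sub _ _ h1, Complex.cpow_one]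
  have e2 : (1 - z) ^ ((α : ℂ) + 1 - 1) = (1 - z) ^ ((α : ℂ) + 1) / (1 - z) := by
    rw [Complex.cpow_sub _ _ h2, Complex.cpow_one]
  rw [e1, e2]
  unfold gfun hfun
  field_simp
  ring

lemma hfun_hasDeriv (α : ℝ) {z : ℂ} (hz : z ∈ unitDisk) :
    HasDerivAt (hfun α)
      ((0 * (1 + z) - ((α : ℂ) - 1) * 1) / (1 + z) ^ 2
        + (0 * (1 - z) - ((α : ℂ) + 1) * (-1)) / (1 - z) ^ 2) z := by
  exact ((hasDerivAt_const z _).div ((hasDerivAt_id z).const_add 1) (one_add_ne hz)).add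
    ((hasDerivAt_const z _).div ((hasDerivAt_id z).const_sub 1) (one_sub_ne hz))

theorem stmt11 (α : ℝ) (hα : 1 < α ∧ α ≤ 2) (f : ℂ → ℂ)
    (hf : DifferentiableOn ℂ f unitDisk) (hf0 : f 0 = 0)
    (hf' : ∀ z ∈ unitDisk,
      deriv f z = (1 + z) ^ ((α : ℂ) - 1) / (1 - z) ^ ((α : ℂ) + 1)) :
    IsConcaveUnivalent α f ∧
    iteratedDeriv 2 f 0 / 2 = (α : ℂ) ∧
    iteratedDeriv 3 f 0 / 6 = (2 * (α : ℂ) ^ 2 + 1) / 3 ∧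
    (∀ lam : ℝ, lam ≤ 2 * (α - 1) / (3 * α) →
      ‖iteratedDeriv 3 f 0 / 6 - (lam : ℂ) * (iteratedDeriv 2 f 0 / 2) ^ 2‖
        = (2 * α ^ 2 + 1) / 3 - lam * α ^ 2) ∧
    (∀ lam : ℝ, (4 * α ^ 2 - 1 + Real.sqrt (8 * α ^ 2 + 1)) / (6 * α ^ 2) ≤ lam →
      ‖iteratedDeriv 3 f 0 / 6 - (lam : ℂ) * (iteratedDeriv 2 f 0 / 2) ^ 2‖
        = lam * α ^ 2 - (2 * α ^ 2 + 1) / 3) := by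
  obtain ⟨hα1, hα2⟩ := hα
  have hα0 : (0 : ℝ) < α := by linarith
  have hopen : IsOpen unitDisk := isOpen_ball
  have hgf : ∀ z ∈ unitDisk, deriv f z = gfun α z := hf'
  -- second derivative on the disk
  have hd2 : ∀ z ∈ unitDisk, deriv (deriv f) z = gfun α z * hfun α z := by
    intro z hz
    have heq : deriv f =ᶠ[nhds z] gfun α :=
      Filter.eventuallyEq_of_mem (hopen.mem_nhds hz) hgf
    rw [heq.deriv_eq, (gfun_hasDeriv α hz).deriv]
  -- third derivative at 0
  have hd3 : deriv (deriv (deriv f)) 0 = 4 * (α : ℂ) ^ 2 + 2 := by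
    have heq : deriv (deriv f) =ᶠ[nhds 0] (fun z => gfun α z * hfun α z) :=
      Filter.eventuallyEq_of_mem (hopen.mem_nhds zero_mem_disk) hd2
    rw [heq.deriv_eq]
    have hF : HasDerivAt (fun z => gfun α z * hfun α z)
        ((gfun α 0 * hfun α 0) * hfun α 0 + gfun α 0 *
          ((0 * (1 + 0) - ((α : ℂ) - 1) * 1) / (1 + 0) ^ 2
            + (0 * (1 - 0) - ((α : ℂ) + 1) * (-1)) / (1 - 0) ^ 2)) 0 :=
      (gfun_hasDeriv α zero_mem_disk).mul (hfun_hasDeriv α zero_mem_disk)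
    rw [hF.deriv]
    have hg0 : gfun α 0 = 1 := by simp [gfun, Complex.one_cpow]
    have hh0 : hfun α 0 = 2 * (α : ℂ) := by simp [hfun]; ring
    rw [hg0, hh0]; ring
  have E2 : iteratedDeriv 2 f 0 / 2 = (α : ℂ) := by
    rw [show (2 : ℕ) = 1 + 1 from rfl, iteratedDeriv_succ, iteratedDeriv_one]
    rw [hd2 0 zero_mem_disk]
    have hg0 : gfun α 0 = 1 := by simp [gfun, Complex.one_cpow]
    have hh0 : hfun α 0 = 2 * (α : ℂ) := by simp [hfun]; ring
    rw [hg0, hh0]; ring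
  have E3 : iteratedDeriv 3 f 0 / 6 = (2 * (α : ℂ) ^ 2 + 1) / 3 := by
    rw [show (3 : ℕ) = 1 + 1 + 1 from rfl, iteratedDeriv_succ, iteratedDeriv_succ,
      iteratedDeriv_one, hd3]
    ring
  have hc1 : ((α : ℂ) - 1) ≠ 0 := by
    rw [sub_ne_zero]
    exact_mod_cast hα1.ne'
  refine ⟨⟨hf, hf0, ?_, ?_, ?_⟩, E2, E3, ?_, ?_⟩
  · rw [hgf 0 zero_mem_disk]; simp [gfun, Complex.one_cpow]
  · intro z hz; rw [hgf z hz]; exact gfun_ne α hz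
  · intro z hz
    have h1 := one_add_ne hz
    have h2 := one_sub_ne hz
    have hP : Pfun α f z = (1 - z) / (1 + z) := by
      unfold Pfun
      rw [hd2 z hz, hgf z hz]
      rw [show z * (gfun α z * hfun α z) / gfun α z = z * hfun α z by
        field_simp [gfun_ne α hz]]
      unfold hfun
      field_simp
      ring
    rw [hP, Complex.div_re, ← add_div]
    apply div_pos
    · have habs : ‖z‖ < 1 := mem_disk' hz
      have hsq : z.re * z.re + z.im * z.im < 1 := by
        have := Complex.sq_norm z
        rw [Complex.normSq_apply] at this
        nlinarith [norm_nonneg z]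
      simp only [Complex.sub_re, Complex.add_re, Complex.one_re, Complex.sub_im,
        Complex.add_im, Complex.one_im]
      nlinarith
    · exact Complex.normSq_pos.2 h1
  · intro lam hlam
    rw [E2, E3]
    have : (2 * (α : ℂ) ^ 2 + 1) / 3 - (lam : ℂ) * (α : ℂ) ^ 2
        = (((2 * α ^ 2 + 1) / 3 - lam * α ^ 2 : ℝ) : ℂ) := by push_cast; ring
    rw [this, Complex.norm_real, Real.norm_eq_abs]
    apply _root_.abs_of_nonneg
    have h3α : (0 : ℝ) < 3 * α := by linarith
    have hl : lam * (3 * α) ≤ 2 * (α - 1) := by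
      rw [le_div_iff₀ h3α] at hlam; linarith
    nlinarith [mul_le_mul_of_nonneg_right hl hα0.le]
  · intro lam hlam
    rw [E2, E3]
    have : (2 * (α : ℂ) ^ 2 + 1) / 3 - (lam : ℂ) * (α : ℂ) ^ 2
        = (((2 * α ^ 2 + 1) / 3 - lam * α ^ 2 : ℝ) : ℂ) := by push_cast; ring
    rw [this, Complex.norm_real, Real.norm_eq_abs]
    have hs3 : (3 : ℝ) ≤ Real.sqrt (8 * α ^ 2 + 1) := by
      rw [show (3 : ℝ) = Real.sqrt 9 by
        rw [show (9 : ℝ) = 3 ^ 2 by norm_num, Real.sqrt_sq (by norm_num)]]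
      apply Real.sqrt_le_sqrt
      nlinarith
    have h6α : (0 : ℝ) < 6 * α ^ 2 := by nlinarith
    have hl : 4 * α ^ 2 + 2 ≤ lam * (6 * α ^ 2) := by
      rw [div_le_iff₀ h6α] at hlam; linarith
    rw [abs_of_nonpos (by linarith)]
    ring
end
end
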